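/- For every discrete gradient vector field V on a finite regular CW complex there exists an injective discrete Morse function whose gradient vector field is exactly V; in particular there exists a function g: Cells(K) → ℕ that is a linear extension of the partial order induced by V. -/

import Mathlib

open Classical

variable {Cell : Type}

/-- A discrete vector field: a set of pairs (σ,τ) with σ a facet of τ,
each cell occurring in at most one pair. -/
def IsVectorField (facet : Cell → Cell → Prop) (V : Set (Cell × Cell)) : Prop :=
  (∀ p ∈ V, facet p.1 p.2) ∧
  ∀ p ∈ V, ∀ q ∈ V, (p.1 = q.1 ∨ p.1 = q.2 ∨ p.2 = q.1 ∨ p.2 = q.2) → p = q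

/-- The covering relation ←_V : `covRel facet V x y` means x ←_V y. -/
def covRel (facet : Cell → Cell → Prop) (V : Set (Cell × Cell)) (x y : Cell) : Prop :=
  (facet x y ∧ (x, y) ∉ V) ∨ (y, x) ∈ V

/-- The strict partial order ≺_V induced by V: transitive closure of ←_V. -/
def indOrder (facet : Cell → Cell → Prop) (V : Set (Cell × Cell)) : Cell → Cell → Prop :=
  Relation.TransGen (covRel facet V)

/-- The reflexive closure ⪯_V of ≺_V. -/
def indOrderLe (facet : Cell → Cell → Prop) (V : Set (Cell × Cell)) : Cell → Cell → Prop :=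
  Relation.ReflTransGen (covRel facet V)

/-- A V-path (σ₀,τ₀,σ₁,…,τ_{r-1},σ_r), encoded by its first cell σ₀ and the
list of pairs (τ_i, σ_{i+1}). -/
def IsVPath (facet : Cell → Cell → Prop) (V : Set (Cell × Cell)) :
    Cell → List (Cell × Cell) → Prop
  | _, [] => True
  | σ, (τ, σ') :: rest => (σ, τ) ∈ V ∧ facet σ' τ ∧ (σ', τ) ∉ V ∧ IsVPath facet V σ' rest

/-- The last cell σ_r of a V-path. -/
def pathLast (σ : Cell) (l : List (Cell × Cell)) : Cell :=
  (l.getLast?.map Prod.snd).getD σ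

/-- No nontrivial closed V-paths. -/
def NoClosedVPath (facet : Cell → Cell → Prop) (V : Set (Cell × Cell)) : Prop :=
  ∀ σ (l : List (Cell × Cell)), IsVPath facet V σ l → l ≠ [] → pathLast σ l ≠ σ

/-- A discrete gradient vector field. -/
def IsGradient (facet : Cell → Cell → Prop) (V : Set (Cell × Cell)) : Prop :=
  IsVectorField facet V ∧ NoClosedVPath facet V

/-- A cell is critical if it belongs to no pair of V. -/
def IsCritical (V : Set (Cell × Cell)) (x : Cell) : Prop :=
  ∀ p ∈ V, p.1 ≠ x ∧ p.2 ≠ x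

/-- f is a discrete Morse function with gradient vector field V. -/
def IsMorse (facet : Cell → Cell → Prop) (V : Set (Cell × Cell)) (f : Cell → ℝ) : Prop :=
  ∀ σ τ, facet σ τ → (((σ, τ) ∉ V → f σ < f τ) ∧ ((σ, τ) ∈ V → f τ ≤ f σ))

/-- f is a discrete pseudo-Morse function consistent with V. -/
def IsPseudoMorse (facet : Cell → Cell → Prop) (V : Set (Cell × Cell)) (f : Cell → ℝ) : Prop :=
  ∀ σ τ, facet σ τ → (((σ, τ) ∉ V → f σ ≤ f τ) ∧ ((σ, τ) ∈ V → f τ ≤ f σ))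

/-- The pairs (σ_i, τ_i) of a V-path given by σ₀ and l = [(τ₀,σ₁),…]. -/
def oldPairs (σ0 : Cell) (l : List (Cell × Cell)) : List (Cell × Cell) :=
  List.zip (σ0 :: l.map Prod.snd) (l.map Prod.fst)

/-- The reversed pairs (σ_{i+1}, τ_i) of a V-path. -/
def newPairs (l : List (Cell × Cell)) : List (Cell × Cell) :=
  l.map (fun p => (p.2, p.1))

/-- Reversal of V along the V-path from σ₀ ∈ ∂ρ given by l (Forman cancelation). -/
def reverseField (V : Set (Cell × Cell)) (ρ σ0 : Cell) (l : List (Cell × Cell)) :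
    Set (Cell × Cell) :=
  (V \ {p : Cell × Cell | p ∈ oldPairs σ0 l}) ∪ {p : Cell × Cell | p ∈ newPairs l} ∪ {(σ0, ρ)}

/-- A combinatorial surface (closed): facets raise dimension by one, dimensions are ≤ 2,
every 1-cell has exactly two boundary 0-cells and is a facet of exactly two 2-cells. -/
def IsCombSurface (dim : Cell → ℕ) (facet : Cell → Cell → Prop) : Prop :=
  (∀ σ τ, facet σ τ → dim τ = dim σ + 1) ∧
  (∀ x, dim x ≤ 2) ∧
  (∀ τ, dim τ = 1 → ∃ a b, a ≠ b ∧ ∀ x, facet x τ ↔ (x = a ∨ x = b)) ∧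
  (∀ τ, dim τ = 1 → ∃ A B, A ≠ B ∧ ∀ X, facet τ X ↔ (X = A ∨ X = B))

lemma pathLast_cons (σ : Cell) (p : Cell × Cell) (l : List (Cell × Cell)) :
    pathLast σ (p :: l) = pathLast p.2 l := by
  cases l with
  | nil => simp [pathLast]
  | cons q t =>
    have h : (q :: t).getLast? = some ((q :: t).getLast (List.cons_ne_nil _ _)) :=
      List.getLast?_eq_getLast _
    simp [pathLast, List.getLast?_cons_cons, h]

lemma pathLast_append_single (σ : Cell) (l : List (Cell × Cell)) (p : Cell × Cell) :
    pathLast σ (l ++ [p]) = p.2 := by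
  simp [pathLast, List.getLast?_append]

lemma vpath_append (facet : Cell → Cell → Prop) (V : Set (Cell × Cell)) :
    ∀ (P : List (Cell × Cell)) (σ0 τ σ' : Cell), IsVPath facet V σ0 P →
      (pathLast σ0 P, τ) ∈ V → facet σ' τ → (σ', τ) ∉ V →
      IsVPath facet V σ0 (P ++ [(τ, σ')]) := by
  intro P
  induction P with
  | nil =>
    intro σ0 τ σ' _ h1 h2 h3
    exact ⟨h1, h2, h3, trivial⟩
  | cons p t ih =>
    intro σ0 τ σ' hP h1 h2 h3
    obtain ⟨q, r⟩ := p
    obtain ⟨ha, hb, hc, hd⟩ := hP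
    rw [pathLast_cons] at h1
    exact ⟨ha, hb, hc, ih r τ σ' hd h1 h2 h3⟩

lemma chain_split {r : Cell → Cell → Prop} :
    ∀ (l : List Cell) (a : Cell), List.Chain r a l → ∀ b ∈ l,
      Relation.ReflTransGen r a b ∧
        Relation.ReflTransGen r b ((a :: l).getLast (List.cons_ne_nil _ _)) := by
  intro l
  induction l with
  | nil => intro a _ b hb; simp at hb
  | cons x t ih =>
    intro a hch b hb
    unfold List.Chain at hch
    rw [List.chain_cons] at hch
    rw [List.getLast_cons_cons]
    rcases List.mem_cons.mp hb with rfl | hb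
    · refine ⟨Relation.ReflTransGen.single hch.1, ?_⟩
      exact List.relationReflTransGen_of_exists_isChain_cons t hch.2 rfl
    · obtain ⟨h1, h2⟩ := ih x hch.2 b hb
      exact ⟨Relation.ReflTransGen.head hch.1 h1, h2⟩

/-- Walking a cycle below maximal dimension `D`: starting from a cell `σ` of
dimension `D-1` that was just reached by a downward `V`-step, the chain is forced
to alternate and yields (reading backwards) a `V`-path ending at `σ`. -/
lemma walk (dim : Cell → ℕ) (facet : Cell → Cell → Prop)
    (hdim : ∀ σ τ, facet σ τ → dim τ = dim σ + 1)
    (V : Set (Cell × Cell)) (hVF : IsVectorField facet V)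
    (D : ℕ) (τ0 : Cell) (hτ0 : dim τ0 = D) :
    ∀ (n : ℕ) (cells : List Cell), cells.length ≤ n → ∀ (σ τp : Cell),
      (σ, τp) ∈ V → dim σ + 1 = D →
      List.Chain (covRel facet V) σ cells →
      (σ :: cells).getLast (List.cons_ne_nil _ _) = τ0 →
      (∀ z ∈ cells, dim z ≤ D) →
      ∃ σ0 P, IsVPath facet V σ0 P ∧ pathLast σ0 P = σ ∧ facet σ0 τ0 ∧ (σ0, τ0) ∉ V := by
  intro n
  induction n with
  | zero =>
    intro cells hlen σ τp _ hσd _ hlast _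
    have : cells = [] := List.eq_nil_of_length_eq_zero (Nat.le_zero.mp hlen)
    subst this
    simp at hlast
    subst hlast
    omega
  | succ n ih =>
    intro cells hlen σ τp hpair hσd hch hlast hdims
    match cells with
    | [] =>
      simp at hlast
      subst hlast
      omega
    | a :: rest =>
      unfold List.Chain at hch
      rw [List.chain_cons] at hch
      -- first step must be an "up" step (type A)
      have hA : facet σ a ∧ (σ, a) ∉ V := by
        rcases hch.1 with h | h
        · exact h
        · -- (a, σ) ∈ V conflicts with (σ, τp) ∈ V
          exfalso
          have := hVF.2 (a, σ) h (σ, τp) hpair (Or.inr (Or.inr (Or.inl rfl)))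
          have ha : a = σ := congrArg Prod.fst this
          subst ha
          have := hdim a a (hVF.1 _ h)
          omega
      have hda : dim a = D := by
        have := hdim σ a hA.1; omega
      match rest with
      | [] =>
        simp at hlast
        subst hlast
        exact ⟨σ, [], trivial, rfl, hA.1, hA.2⟩
      | b :: rest2 =>
        rw [List.chain_cons] at hch
        -- second step must be a "down" V-step (type B)
        have hB : (b, a) ∈ V := by
          rcases hch.2.1 with h | h
          · exfalso
            have := hdim a b h.1
            have := hdims b (by simp)
            omega
          · exact h
        have hdb : dim b + 1 = D := by
          have := hdim b a (hVF.1 _ hB); omega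
        have hlast' : (b :: rest2).getLast (List.cons_ne_nil _ _) = τ0 := by
          rw [List.getLast_cons_cons, List.getLast_cons_cons] at hlast
          exact hlast
        have hlen' : rest2.length ≤ n := by simp at hlen; omega
        obtain ⟨σ0, P, hP, hPlast, hfc, hnv⟩ :=
          ih rest2 hlen' b a hB hdb hch.2.2 hlast'
            (fun z hz => hdims z (by simp [hz]))
        refine ⟨σ0, P ++ [(a, σ)], ?_, ?_, hfc, hnv⟩
        · exact vpath_append facet V P σ0 a σ hP (hPlast ▸ hB) hA.1 hA.2
        · exact pathLast_append_single σ0 P (a, σ)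

/-- The induced order of a gradient vector field is irreflexive. -/
lemma noCycle [Fintype Cell] (dim : Cell → ℕ) (facet : Cell → Cell → Prop)
    (hdim : ∀ σ τ, facet σ τ → dim τ = dim σ + 1)
    (V : Set (Cell × Cell)) (hV : IsGradient facet V) :
    ∀ x, ¬ indOrder facet V x x := by
  intro x hx
  classical
  set T : Finset Cell := Finset.univ.filter (fun z => indOrder facet V z z) with hT
  have hxT : x ∈ T := by simp [hT, hx]
  obtain ⟨τ0, hτ0T, hmax⟩ := T.exists_max_image dim ⟨x, hxT⟩
  have hcyc : Relation.TransGen (covRel facet V) τ0 τ0 := by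
    exact (Finset.mem_filter.mp hτ0T).2
  set D := dim τ0 with hD
  -- decompose the cycle
  obtain ⟨c, hstep, hrtg⟩ := Relation.TransGen.head'_iff.mp hcyc
  obtain ⟨l, hchain, hlast⟩ := List.exists_isChain_cons_of_relationReflTransGen hrtg
  -- every cell on the cycle lies on a cycle, hence has dimension ≤ D
  have hmem : ∀ z, Relation.ReflTransGen (covRel facet V) c z →
      Relation.ReflTransGen (covRel facet V) z τ0 → dim z ≤ D := by
    intro z h1 h2
    have hz : Relation.TransGen (covRel facet V) z z :=
      Relation.TransGen.trans_right h2 (Relation.TransGen.head' hstep h1)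
    have : z ∈ T := Finset.mem_filter.mpr ⟨Finset.mem_univ _, hz⟩
    exact hmax z this
  have hrtc : Relation.ReflTransGen (covRel facet V) c τ0 :=
    List.relationReflTransGen_of_exists_isChain_cons l hchain hlast
  -- the first step of the cycle must be a down V-step
  have hB : (c, τ0) ∈ V := by
    rcases hstep with h | h
    · exfalso
      have h1 := hdim τ0 c h.1
      have h2 := hmem c (Relation.ReflTransGen.refl) hrtc
      omega
    · exact h
  have hdc : dim c + 1 = D := by
    have := hdim c τ0 (hV.1.1 _ hB); omega
  have hdims : ∀ z ∈ l, dim z ≤ D := by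
    intro z hz
    obtain ⟨h1, h2⟩ := chain_split l c hchain z hz
    exact hmem z h1 (hlast ▸ h2)
  obtain ⟨σ0, P, hP, hPlast, hfc, hnv⟩ :=
    walk dim facet hdim V hV.1 D τ0 hD.symm l.length l le_rfl c τ0 hB hdc hchain hlast hdims
  -- close up the V-path: contradiction with NoClosedVPath
  have hQ : IsVPath facet V σ0 (P ++ [(τ0, σ0)]) :=
    vpath_append facet V P σ0 τ0 σ0 hP (hPlast ▸ hB) hfc hnv
  exact hV.2 σ0 (P ++ [(τ0, σ0)]) hQ (by simp)
    (pathLast_append_single σ0 P (τ0, σ0))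

/-- every gradient vector field is the gradient vector field of some
injective discrete Morse function; in particular there is g : Cells → ℕ which is a
linear extension of the induced partial order. -/
theorem stmt2 [Fintype Cell] (dim : Cell → ℕ) (facet : Cell → Cell → Prop)
    (hdim : ∀ σ τ, facet σ τ → dim τ = dim σ + 1)
    (V : Set (Cell × Cell)) (hV : IsGradient facet V) :
    (∃ f : Cell → ℝ, Function.Injective f ∧ IsMorse facet V f) ∧
    (∃ g : Cell → ℕ, Function.Injective g ∧
      ∀ x y, indOrder facet V x y → g x < g y) := by
  classical
  have hirr := noCycle dim facet hdim V hV
  letI PO : PartialOrder Cell :=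
    { le := fun x y => x = y ∨ indOrder facet V x y
      le_refl := fun x => Or.inl rfl
      le_trans := by
        rintro a b c (rfl | h1) (rfl | h2)
        · exact Or.inl rfl
        · exact Or.inr h2
        · exact Or.inr h1
        · exact Or.inr (h1.trans h2)
      le_antisymm := by
        rintro a b (rfl | h1) h2
        · rfl
        · rcases h2 with rfl | h2
          · rfl
          · exact absurd (h1.trans h2) (hirr a) }
  letI : Fintype (LinearExtension Cell) := ‹Fintype Cell›
  let e := (monoEquivOfFin (LinearExtension Cell) rfl).symm
  let g : Cell → ℕ := fun x => (e (toLinearExtension x)).val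
  have hmono : ∀ x y, indOrder facet V x y → g x < g y := by
    intro x y h
    have hle : toLinearExtension x ≤ toLinearExtension y :=
      toLinearExtension.monotone (Or.inr h)
    have hne : toLinearExtension x ≠ toLinearExtension y := by
      intro hxy
      have hxy' : x = y := hxy
      subst hxy'
      exact hirr x h
    have hlt : toLinearExtension x < toLinearExtension y := lt_of_le_of_ne hle hne
    exact e.lt_iff_lt.mpr hlt
  have hginj : Function.Injective g := by
    intro a b hab
    have h1 : e (toLinearExtension a) = e (toLinearExtension b) := Fin.val_injective hab
    have h2 : toLinearExtension a = toLinearExtension b := e.injective h1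
    exact h2
  refine ⟨⟨fun x => (g x : ℝ), ?_, ?_⟩, g, hginj, hmono⟩
  · intro a b hab
    exact hginj (Nat.cast_injective hab)
  · intro σ τ hfac
    constructor
    · intro hnv
      have := hmono σ τ (Relation.TransGen.single (Or.inl ⟨hfac, hnv⟩))
      simpa using (Nat.cast_lt (α := ℝ)).mpr this
    · intro hv
      have := le_of_lt (hmono τ σ (Relation.TransGen.single (Or.inr hv)))
      simpa using (Nat.cast_le (α := ℝ)).mpr this
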